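/- Let R be a finite local ring of odd characteristic and let β be a non-degenerate symmetric bilinear form on R² with associated matrix B. Then there exist an invertible 2×2 matrix P over R and an element u ∈ R, where either u = 1 or u is a non-square unit of R, such that Pᵀ B P is the diagonal matrix diag(1, −u); that is, β is equivalent to the form ((x₁,x₂),(y₁,y₂)) ↦ x₁y₁ − u·x₂y₂. -/

import Mathlib

open Matrix

section Aux

set_option linter.unusedSectionVars false

variable {R : Type*} [CommRing R] [IsLocalRing R] [Fintype R]

lemma aux_inv {t : R} (ht : IsUnit t) : ∃ w : R, t * w = 1 := by
  obtain ⟨u, hu⟩ := ht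
  exact ⟨(↑u⁻¹ : Rˣ), by rw [← hu]; exact u.mul_inv⟩


lemma aux_tr (a b c d : R) : (!![a, b; c, d])ᵀ = !![a, c; b, d] := by
  ext i j
  fin_cases i <;> fin_cases j <;> first | rfl | simp

lemma aux_diag (a b : R) : Matrix.diagonal ![a, b] = !![a, 0; 0, b] := by
  ext i j
  fin_cases i <;> fin_cases j <;> simp [Matrix.diagonal_apply]

lemma aux_two_unit (hchar : Odd (ringChar R)) : IsUnit (2 : R) := by
  obtain ⟨k, hk⟩ := hchar
  have h0 : ((ringChar R : ℕ) : R) = 0 := (ringChar.spec R (ringChar R)).mpr dvd_rfl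
  have h1 : ((2 * k + 1 : ℕ) : R) = 0 := by rw [← hk]; exact h0
  push_cast at h1
  refine IsUnit.of_mul_eq_one (a := (2 : R)) (-(k : R)) ?_
  linear_combination -h1

lemma aux_nilpotent_of_mem (x : R) (hx : x ∈ IsLocalRing.maximalIdeal R) :
    IsNilpotent x := by
  have hart : IsArtinianRing R := isArtinian_of_finite
  have h := IsArtinianRing.isNilpotent_jacobson_bot (R := R)
  rw [IsLocalRing.jacobson_eq_maximalIdeal ⊥ bot_ne_top] at h
  obtain ⟨n, hn⟩ := h
  refine ⟨n, ?_⟩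
  have := Ideal.pow_mem_pow hx n
  rw [hn] at this
  simpa using this

lemma aux_nonunit_of_nilpotent {e : R} (he : IsNilpotent e) : ¬ IsUnit e := by
  intro hu
  obtain ⟨n, hn⟩ := he
  have : IsUnit (e ^ n) := hu.pow n
  rw [hn, isUnit_zero_iff] at this
  exact zero_ne_one this

lemma aux_newton (h2 : IsUnit (2 : R)) (a c y : R) (ha : IsUnit a) :
    ∀ n : ℕ, ∀ x : R, IsUnit x → (a * x ^ 2 + c * y ^ 2 - 1) ^ (2 ^ n) = 0 →
      ∃ x' : R, IsUnit x' ∧ a * x' ^ 2 + c * y ^ 2 = 1 := by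
  intro n
  induction n with
  | zero =>
    intro x hx h
    rw [pow_zero, pow_one] at h
    exact ⟨x, hx, by linear_combination h⟩
  | succ n ih =>
    intro x hx h
    set e : R := a * x ^ 2 + c * y ^ 2 - 1 with he
    obtain ⟨z, hz⟩ : ∃ z : R, (2 * a * x) * z = 1 := aux_inv ((h2.mul ha).mul hx)
    have henil : IsNilpotent e := ⟨2 ^ (n + 1), h⟩
    have hem : e ∈ IsLocalRing.maximalIdeal R := by
      rw [IsLocalRing.mem_maximalIdeal]
      exact aux_nonunit_of_nilpotent henil
    set x' : R := x - e * z with hx'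
    have hx'u : IsUnit x' := by
      by_contra hcon
      have hx'm : x' ∈ IsLocalRing.maximalIdeal R := by
        rw [IsLocalRing.mem_maximalIdeal]; exact hcon
      have : x ∈ IsLocalRing.maximalIdeal R := by
        have hxe : x = x' + e * z := by rw [hx']; ring
        rw [hxe]
        exact Ideal.add_mem _ hx'm (Ideal.mul_mem_right z _ hem)
      exact (IsLocalRing.mem_maximalIdeal x).mp this hx
    have key : a * x' ^ 2 + c * y ^ 2 - 1 = a * z ^ 2 * e ^ 2 := by
      rw [hx']
      linear_combination (-e) * hz
    have hnext : (a * x' ^ 2 + c * y ^ 2 - 1) ^ (2 ^ n) = 0 := by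
      rw [key, mul_pow, ← pow_mul]
      have : e ^ (2 * 2 ^ n) = 0 := by
        rw [show 2 * 2 ^ n = 2 ^ (n + 1) by ring]
        exact h
      rw [this, mul_zero]
    exact ih x' hx'u hnext

lemma aux_rep (h2 : IsUnit (2 : R)) (hchar : Odd (ringChar R))
    {a c : R} (ha : IsUnit a) (hc : IsUnit c) :
    ∃ x y : R, (IsUnit x ∨ IsUnit y) ∧ a * x ^ 2 + c * y ^ 2 = 1 := by
  classical
  set k := IsLocalRing.ResidueField R
  have : Finite k := Finite.of_surjective (IsLocalRing.residue R)
    Ideal.Quotient.mk_surjective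
  have : Fintype k := Fintype.ofFinite k
  -- char of residue field is odd
  have hkchar : ringChar k ≠ 2 := by
    have hdvd : ringChar k ∣ ringChar R := by
      have h0 : ((ringChar R : ℕ) : R) = 0 := (ringChar.spec R (ringChar R)).mpr dvd_rfl
      have hk0 : ((ringChar R : ℕ) : k) = 0 := by
        calc ((ringChar R : ℕ) : k)
            = IsLocalRing.residue R ((ringChar R : ℕ) : R) := (map_natCast _ _).symm
          _ = 0 := by rw [h0, map_zero]
      exact (ringChar.spec k (ringChar R)).mp hk0
    intro h2'
    rw [h2'] at hdvd
    rw [Nat.odd_iff] at hchar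
    omega
  have hcard : Fintype.card k % 2 = 1 := FiniteField.odd_card_of_char_ne_two hkchar
  set ra := IsLocalRing.residue R a with hra
  set rc := IsLocalRing.residue R c with hrc
  have hra0 : ra ≠ 0 := by
    intro h
    have : a ∈ IsLocalRing.maximalIdeal R := Ideal.Quotient.eq_zero_iff_mem.mp h
    exact (IsLocalRing.mem_maximalIdeal a).mp this ha
  have hrc0 : rc ≠ 0 := by
    intro h
    have : c ∈ IsLocalRing.maximalIdeal R := Ideal.Quotient.eq_zero_iff_mem.mp h
    exact (IsLocalRing.mem_maximalIdeal c).mp this hc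
  -- solve over the residue field
  obtain ⟨xb, yb, hxy⟩ : ∃ xb yb : k, ra * xb ^ 2 + rc * yb ^ 2 = 1 := by
    have hf : (Polynomial.C ra * Polynomial.X ^ 2).degree = 2 :=
      Polynomial.degree_C_mul_X_pow 2 hra0
    have hg : (Polynomial.C rc * Polynomial.X ^ 2 - Polynomial.C 1).degree = 2 := by
      have hlt : (Polynomial.C (1 : k)).degree < (Polynomial.C rc * Polynomial.X ^ 2).degree := by
        rw [Polynomial.degree_C_mul_X_pow 2 hrc0]
        refine lt_of_le_of_lt Polynomial.degree_C_le ?_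
        exact_mod_cast (by norm_num : (0 : ℕ) < 2)
      rw [Polynomial.degree_sub_eq_left_of_degree_lt hlt]
      exact Polynomial.degree_C_mul_X_pow 2 hrc0
    obtain ⟨xb, yb, hxy⟩ := FiniteField.exists_root_sum_quadratic hf hg hcard
    refine ⟨xb, yb, ?_⟩
    simp only [Polynomial.eval_sub, Polynomial.eval_mul, Polynomial.eval_pow,
      Polynomial.eval_C, Polynomial.eval_X, Polynomial.eval_one] at hxy
    linear_combination hxy
  have hne : xb ≠ 0 ∨ yb ≠ 0 := by
    by_contra hcon
    push_neg at hcon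
    rw [hcon.1, hcon.2] at hxy
    simp at hxy
  obtain ⟨x0, hx0⟩ := Ideal.Quotient.mk_surjective (I := IsLocalRing.maximalIdeal R) xb
  obtain ⟨y0, hy0⟩ := Ideal.Quotient.mk_surjective (I := IsLocalRing.maximalIdeal R) yb
  have hx0r : IsLocalRing.residue R x0 = xb := hx0
  have hy0r : IsLocalRing.residue R y0 = yb := hy0
  have hem : a * x0 ^ 2 + c * y0 ^ 2 - 1 ∈ IsLocalRing.maximalIdeal R := by
    rw [← Ideal.Quotient.eq_zero_iff_mem]
    show IsLocalRing.residue R _ = 0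
    rw [map_sub, map_add, _root_.map_mul, _root_.map_mul, map_pow, map_pow, _root_.map_one,
      hx0r, hy0r, ← hra, ← hrc, hxy, sub_self]
  obtain ⟨m, hm⟩ := aux_nilpotent_of_mem _ hem
  have hpow : (a * x0 ^ 2 + c * y0 ^ 2 - 1) ^ (2 ^ m) = 0 := by
    calc (a * x0 ^ 2 + c * y0 ^ 2 - 1) ^ (2 ^ m)
        = (a * x0 ^ 2 + c * y0 ^ 2 - 1) ^ m * (a * x0 ^ 2 + c * y0 ^ 2 - 1) ^ (2 ^ m - m) := by
          rw [← pow_add]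
          congr 1
          have := Nat.lt_two_pow_self (n := m)
          omega
      _ = 0 := by rw [hm, zero_mul]
  have unit_of_res_ne : ∀ t : R, IsLocalRing.residue R t ≠ 0 → IsUnit t := by
    intro t ht
    by_contra hcon
    exact ht (Ideal.Quotient.eq_zero_iff_mem.mpr ((IsLocalRing.mem_maximalIdeal t).mpr hcon))
  rcases hne with hx | hy
  · have hx0u : IsUnit x0 := unit_of_res_ne x0 (by rw [hx0r]; exact hx)
    obtain ⟨x', hx'u, hx'⟩ := aux_newton h2 a c y0 ha m x0 hx0u hpow
    exact ⟨x', y0, Or.inl hx'u, hx'⟩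
  · have hy0u : IsUnit y0 := unit_of_res_ne y0 (by rw [hy0r]; exact hy)
    have hpow' : (c * y0 ^ 2 + a * x0 ^ 2 - 1) ^ (2 ^ m) = 0 := by
      rw [show c * y0 ^ 2 + a * x0 ^ 2 - 1 = a * x0 ^ 2 + c * y0 ^ 2 - 1 by ring]
      exact hpow
    obtain ⟨y', hy'u, hy'⟩ := aux_newton h2 c a x0 hc m y0 hy0u hpow'
    exact ⟨x0, y', Or.inr hy'u, by linear_combination hy'⟩

lemma aux_conj (B P1 P2 : Matrix (Fin 2) (Fin 2) R) :
    (P1 * P2)ᵀ * B * (P1 * P2) = P2ᵀ * (P1ᵀ * B * P1) * P2 := by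
  rw [Matrix.transpose_mul]
  noncomm_ring

lemma aux_clear (M : Matrix (Fin 2) (Fin 2) R) (hs : M 1 0 = M 0 1)
    (h0 : IsUnit (M 0 0)) :
    ∃ (P : Matrix (Fin 2) (Fin 2) R) (c : R), P.det = 1 ∧
      Pᵀ * M * P = Matrix.diagonal ![M 0 0, c] := by
  obtain ⟨w, hw⟩ : ∃ w : R, M 0 0 * w = 1 := aux_inv h0
  refine ⟨!![1, -(M 0 1) * w; 0, 1], M 1 1 - M 1 0 * (M 0 1 * w), ?_, ?_⟩
  · rw [Matrix.det_fin_two]; simp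
  · rw [aux_tr, aux_diag]
    ext i j
    fin_cases i <;> fin_cases j <;>
      simp only [Matrix.mul_apply, Fin.sum_univ_two, Matrix.cons_val', Matrix.cons_val_zero,
          Matrix.cons_val_one, Matrix.head_cons, Matrix.head_fin_const, Matrix.empty_val',
          Matrix.cons_val_fin_one, Matrix.of_apply, Fin.mk_zero, Fin.mk_one, Matrix.vecHead,
        Matrix.vecTail] <;>
      first
        | ring1
        | linear_combination (-(M 0 1)) * hw
        | linear_combination (M 0 1) * hw
        | linear_combination (-(M 0 1)) * hw + hs
        | linear_combination (-(M 0 1)) * hw - hs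
        | linear_combination (M 0 1) * hw + hs
        | linear_combination (M 0 1) * hw - hs
        | linear_combination (M 0 1 * M 0 1 * w) * hw
        | linear_combination (-(M 0 1 * M 0 1 * w)) * hw
        | linear_combination (M 0 1 * M 0 1 * w) * hw + (M 0 1 * w) * hs
        | linear_combination (M 0 1 * M 0 1 * w) * hw - (M 0 1 * w) * hs
        | linear_combination (M 0 1 * M 0 1 * w) * hw + (M 0 0 * w - 1) * hs
        | linear_combination (M 0 1 * M 0 1 * w) * hw - (M 0 0 * w - 1) * hs

lemma aux_step (M : Matrix (Fin 2) (Fin 2) R) (hs : M 1 0 = M 0 1)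
    (hd : IsUnit M.det) (v0 v1 q : R) (hv : IsUnit v0 ∨ IsUnit v1)
    (hq : M 0 0 * v0 ^ 2 + (M 0 1 + M 1 0) * (v0 * v1) + M 1 1 * v1 ^ 2 = q)
    (hqu : IsUnit q) :
    ∃ (P : Matrix (Fin 2) (Fin 2) R) (c : R), IsUnit P.det ∧ IsUnit c ∧
      Pᵀ * M * P = Matrix.diagonal ![q, c] := by
  obtain ⟨P1, hP1det, h00, h10⟩ :
      ∃ P1 : Matrix (Fin 2) (Fin 2) R, IsUnit P1.det ∧
        (P1ᵀ * M * P1) 0 0 = q ∧ (P1ᵀ * M * P1) 1 0 = (P1ᵀ * M * P1) 0 1 := by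
    rcases hv with hv0 | hv1
    · refine ⟨!![v0, 0; v1, 1], ?_, ?_, ?_⟩
      · rw [Matrix.det_fin_two]; simpa using hv0
      · rw [aux_tr]
        simp only [Matrix.mul_apply, Fin.sum_univ_two, Matrix.cons_val', Matrix.cons_val_zero,
        Matrix.cons_val_one, Matrix.head_cons, Matrix.head_fin_const, Matrix.empty_val',
        Matrix.cons_val_fin_one, Matrix.of_apply, Fin.mk_zero, Fin.mk_one, Matrix.vecHead,
        Matrix.vecTail]
        linear_combination hq
      · rw [aux_tr]
        simp only [Matrix.mul_apply, Fin.sum_univ_two, Matrix.cons_val', Matrix.cons_val_zero,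
        Matrix.cons_val_one, Matrix.head_cons, Matrix.head_fin_const, Matrix.empty_val',
        Matrix.cons_val_fin_one, Matrix.of_apply, Fin.mk_zero, Fin.mk_one, Matrix.vecHead,
        Matrix.vecTail]
        first
          | ring1
          | linear_combination v0 * hs
          | linear_combination (-v0) * hs
          | linear_combination v1 * hs
          | linear_combination (-v1) * hs
    · refine ⟨!![v0, 1; v1, 0], ?_, ?_, ?_⟩
      · rw [Matrix.det_fin_two]
        simpa using hv1.neg
      · rw [aux_tr]
        simp only [Matrix.mul_apply, Fin.sum_univ_two, Matrix.cons_val', Matrix.cons_val_zero,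
        Matrix.cons_val_one, Matrix.head_cons, Matrix.head_fin_const, Matrix.empty_val',
        Matrix.cons_val_fin_one, Matrix.of_apply, Fin.mk_zero, Fin.mk_one, Matrix.vecHead,
        Matrix.vecTail]
        linear_combination hq
      · rw [aux_tr]
        simp only [Matrix.mul_apply, Fin.sum_univ_two, Matrix.cons_val', Matrix.cons_val_zero,
        Matrix.cons_val_one, Matrix.head_cons, Matrix.head_fin_const, Matrix.empty_val',
        Matrix.cons_val_fin_one, Matrix.of_apply, Fin.mk_zero, Fin.mk_one, Matrix.vecHead,
        Matrix.vecTail]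
        first
          | ring1
          | linear_combination v0 * hs
          | linear_combination (-v0) * hs
          | linear_combination v1 * hs
          | linear_combination (-v1) * hs
  set M1 := P1ᵀ * M * P1 with hM1
  obtain ⟨P2, c, hP2det, hdiag⟩ := aux_clear M1 h10 (h00 ▸ hqu)
  rw [h00] at hdiag
  have hPu : IsUnit (P1 * P2).det := by
    rw [Matrix.det_mul, hP2det, mul_one]; exact hP1det
  refine ⟨P1 * P2, c, hPu, ?_, ?_⟩
  · have hdet : IsUnit ((P1 * P2)ᵀ * M * (P1 * P2)).det := by
      rw [Matrix.det_mul, Matrix.det_mul, Matrix.det_transpose]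
      exact (hPu.mul hd).mul hPu
    rw [aux_conj, ← hM1, hdiag, Matrix.det_diagonal, Fin.prod_univ_two] at hdet
    simp only [Matrix.cons_val_zero, Matrix.cons_val_one, Matrix.head_cons] at hdet
    exact isUnit_of_mul_isUnit_right hdet
  · rw [aux_conj, ← hM1, hdiag]

end Aux

/-- Over a finite local ring `R` of odd characteristic, every non-degenerate
symmetric bilinear form on `R²` with matrix `B` is equivalent to `diag(1, -u)` where
`u = 1` or `u` is a non-square unit. -/
theorem stmt_8 (R : Type*) [CommRing R] [IsLocalRing R] [Fintype R]
    (hchar : Odd (ringChar R))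
    (B : Matrix (Fin 2) (Fin 2) R) (hsymm : B.IsSymm) (hnd : IsUnit B.det) :
    ∃ (P : Matrix (Fin 2) (Fin 2) R) (u : R), IsUnit P.det ∧
      (u = 1 ∨ (IsUnit u ∧ ¬ ∃ r : R, r ^ 2 = u)) ∧
      Pᵀ * B * P = Matrix.diagonal ![1, -u] := by
  classical
  have h2 : IsUnit (2 : R) := aux_two_unit hchar
  have hb : B 1 0 = B 0 1 := by
    have := congrFun (congrFun hsymm 0) 1
    simpa [Matrix.transpose_apply] using this
  -- Step A: find a vector with unit value
  obtain ⟨v0, v1, q, hv, hq, hqu⟩ :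
      ∃ v0 v1 q : R, (IsUnit v0 ∨ IsUnit v1) ∧
        B 0 0 * v0 ^ 2 + (B 0 1 + B 1 0) * (v0 * v1) + B 1 1 * v1 ^ 2 = q ∧ IsUnit q := by
    by_cases ha : IsUnit (B 0 0)
    · exact ⟨1, 0, B 0 0, Or.inl isUnit_one, by ring, ha⟩
    by_cases hdd : IsUnit (B 1 1)
    · exact ⟨0, 1, B 1 1, Or.inr isUnit_one, by ring, hdd⟩
    have hbu : IsUnit (B 0 1) := by
      have hdet := hnd
      rw [Matrix.det_fin_two] at hdet
      by_contra hbn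
      have ham : B 0 0 ∈ IsLocalRing.maximalIdeal R :=
        (IsLocalRing.mem_maximalIdeal _).mpr ha
      have hbm : B 0 1 ∈ IsLocalRing.maximalIdeal R :=
        (IsLocalRing.mem_maximalIdeal _).mpr hbn
      have : B 0 0 * B 1 1 - B 0 1 * B 1 0 ∈ IsLocalRing.maximalIdeal R :=
        Ideal.sub_mem _ (Ideal.mul_mem_right _ _ ham) (Ideal.mul_mem_right _ _ hbm)
      exact (IsLocalRing.mem_maximalIdeal _).mp this hdet
    refine ⟨1, 1, B 0 0 + (B 0 1 + B 1 0) + B 1 1, Or.inl isUnit_one, by ring, ?_⟩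
    by_contra hcon
    have h1 : B 0 0 + (B 0 1 + B 1 0) + B 1 1 ∈ IsLocalRing.maximalIdeal R :=
      (IsLocalRing.mem_maximalIdeal _).mpr hcon
    have ham : B 0 0 ∈ IsLocalRing.maximalIdeal R := (IsLocalRing.mem_maximalIdeal _).mpr ha
    have hdm : B 1 1 ∈ IsLocalRing.maximalIdeal R := (IsLocalRing.mem_maximalIdeal _).mpr hdd
    have h2b : B 0 1 + B 1 0 ∈ IsLocalRing.maximalIdeal R := by
      have heq : B 0 1 + B 1 0 = (B 0 0 + (B 0 1 + B 1 0) + B 1 1) - B 0 0 - B 1 1 := by ring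
      rw [heq]
      exact Ideal.sub_mem _ (Ideal.sub_mem _ h1 ham) hdm
    have h2u : IsUnit (B 0 1 + B 1 0) := by
      rw [hb, show B 0 1 + B 0 1 = 2 * B 0 1 by ring]
      exact h2.mul hbu
    exact (IsLocalRing.mem_maximalIdeal _).mp h2b h2u
  -- Step B: diagonalize to diag(q, c1)
  obtain ⟨P1, c1, hP1, hc1, hD1⟩ := aux_step B hb hnd v0 v1 q hv hq hqu
  -- Step C: represent 1 by diag(q, c1)
  obtain ⟨x, y, hxy, hrep⟩ := aux_rep h2 hchar hqu hc1
  set D : Matrix (Fin 2) (Fin 2) R := Matrix.diagonal ![q, c1] with hD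
  have hDs : D 1 0 = D 0 1 := by simp [hD, Matrix.diagonal_apply]
  have hDd : IsUnit D.det := by
    rw [hD, Matrix.det_diagonal, Fin.prod_univ_two]
    simp only [Matrix.cons_val_zero, Matrix.cons_val_one, Matrix.head_cons]
    exact hqu.mul hc1
  have hDq : D 0 0 * x ^ 2 + (D 0 1 + D 1 0) * (x * y) + D 1 1 * y ^ 2 = 1 := by
    simp [hD, Matrix.diagonal_apply]
    linear_combination hrep
  obtain ⟨P2, c2, hP2, hc2, hD2⟩ := aux_step D hDs hDd x y 1 hxy hDq isUnit_one
  -- Step E: normalize c2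
  by_cases hsq : ∃ r : R, r ^ 2 = -c2
  · obtain ⟨r, hr⟩ := hsq
    have hru : IsUnit r := by
      have hrr : IsUnit (r * r) := by rw [← sq, hr]; exact hc2.neg
      exact isUnit_of_mul_isUnit_right (mul_comm r r ▸ hrr)
    obtain ⟨s, hsr⟩ : ∃ s : R, r * s = 1 := aux_inv hru
    have hsu : IsUnit s := isUnit_of_mul_isUnit_right (show IsUnit (r * s) by
      rw [hsr]; exact isUnit_one)
    refine ⟨P1 * P2 * Matrix.diagonal ![1, s], 1, ?_, Or.inl rfl, ?_⟩
    · rw [Matrix.det_mul, Matrix.det_mul, Matrix.det_diagonal, Fin.prod_univ_two]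
      simp only [Matrix.cons_val_zero, Matrix.cons_val_one, Matrix.head_cons, one_mul]
      exact (hP1.mul hP2).mul hsu
    · rw [aux_conj, aux_conj, hD1, hD2, Matrix.diagonal_transpose,
        Matrix.diagonal_mul_diagonal, Matrix.diagonal_mul_diagonal]
      have hveq : (fun i : Fin 2 => ![1, s] i * ![1, c2] i * ![1, s] i) = ![1, -1] := by
        funext i
        fin_cases i
        · simp
        · simp only [Matrix.cons_val_one, Matrix.head_cons, Fin.mk_one, Fin.mk_zero,
            Matrix.cons_val_zero, Matrix.vecHead, Matrix.vecTail]
          linear_combination (s * s) * hr - (r * s + 1) * hsr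
      rw [hveq]
  · refine ⟨P1 * P2, -c2, ?_, Or.inr ⟨hc2.neg, hsq⟩, ?_⟩
    · rw [Matrix.det_mul]; exact hP1.mul hP2
    · rw [neg_neg, aux_conj, hD1]
      exact hD2
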